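/- Let G be a finite soluble group and N a minimal normal subgroup of G that is complemented in G. Then m(G/N) = m(G) - 1, where m(X) denotes the largest size of an irredundant generating set of X. -/

import Mathlib

open Subgroup
open scoped Classical Pointwise

/-- A set `s` is an irredundant generating set of the group `G`: it generates `G`
but no proper subset does. -/
def IrredSet {G : Type*} [Group G] (s : Set G) : Prop :=
  Subgroup.closure s = ⊤ ∧ ∀ x ∈ s, Subgroup.closure (s \ {x}) ≠ ⊤

/-- `mIrr G` is the largest size of an irredundant generating set of `G`. -/
noncomputable def mIrr (G : Type*) [Group G] : ℕ :=
  sSup {n | ∃ s : Set G, s.Finite ∧ s.ncard = n ∧ IrredSet s}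

/-- `dGen G` is the smallest size of a generating set of `G`. -/
noncomputable def dGen (G : Type*) [Group G] : ℕ :=
  sInf {n | ∃ s : Set G, s.Finite ∧ s.ncard = n ∧ Subgroup.closure s = ⊤}

/-- A sequence `g : Fin n → G` is an irredundant generating sequence:
it generates `G` but no proper subsequence does. -/
def IrredSeq {G : Type*} [Group G] {n : ℕ} (g : Fin n → G) : Prop :=
  Subgroup.closure (Set.range g) = ⊤ ∧
  ∀ i : Fin n, Subgroup.closure (g '' {i}ᶜ) ≠ ⊤

/-- `G` satisfies the replacement property: for every irredundant generating
sequence of maximal length `mIrr G` and every nontrivial `x : G`, some entry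
can be replaced by `x` so that the sequence still generates. -/
def ReplacementProperty (G : Type*) [Group G] : Prop :=
  ∀ g : Fin (mIrr G) → G, IrredSeq g → ∀ x : G, x ≠ 1 →
    ∃ i, Subgroup.closure (Set.range (Function.update g i x)) = ⊤

/-- The strong replacement property: replacement holds for irredundant
generating sequences of any length. -/
def StrongReplacementProperty (G : Type*) [Group G] : Prop :=
  ∀ (n : ℕ) (g : Fin n → G), IrredSeq g → ∀ x : G, x ≠ 1 →
    ∃ i, Subgroup.closure (Set.range (Function.update g i x)) = ⊤

/-- `G` is a K-group: its subgroup lattice is complemented. -/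
def IsKGroup (G : Type*) [Group G] : Prop :=
  ∀ H : Subgroup G, ∃ X : Subgroup G, H ⊔ X = ⊤ ∧ H ⊓ X = ⊥

/-- `μ` is the Möbius function of the subgroup lattice of `G`. -/
def IsMobius {G : Type*} [Group G] (μ : Subgroup G → ℤ) : Prop :=
  ∀ H : Subgroup G, ∑ᶠ K ∈ {K : Subgroup G | H ≤ K}, μ K = if H = ⊤ then 1 else 0

/-- `B/A` is a chief factor of `G`. -/
def ChiefFactor {G : Type*} [Group G] (A B : Subgroup G) : Prop :=
  A.Normal ∧ B.Normal ∧ A < B ∧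
    ∀ N : Subgroup G, N.Normal → A ≤ N → N ≤ B → N = A ∨ N = B

/-- The factor `B/A` is complemented in `G/A`: there is a subgroup `K ≥ A`
with `K ⊔ B = G` and `K ⊓ B = A`. -/
def ComplementedFactor {G : Type*} [Group G] (A B : Subgroup G) : Prop :=
  ∃ K : Subgroup G, A ≤ K ∧ K ⊔ B = ⊤ ∧ K ⊓ B = A

/-- `c` is a chief series of `G`. -/
def IsChiefSeries {G : Type*} [Group G] {n : ℕ} (c : Fin (n + 1) → Subgroup G) : Prop :=
  c 0 = ⊥ ∧ c (Fin.last n) = ⊤ ∧ ∀ i : Fin n, ChiefFactor (c i.castSucc) (c i.succ)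

/-- `N` is a minimal normal subgroup of `G`. -/
def IsMinimalNormal {G : Type*} [Group G] (N : Subgroup G) : Prop :=
  N.Normal ∧ N ≠ ⊥ ∧ ∀ K : Subgroup G, K.Normal → K ≤ N → K = ⊥ ∨ K = N

/-- `F` is the Fitting subgroup of `G`: the largest nilpotent normal subgroup. -/
def IsFitting {G : Type*} [Group G] (F : Subgroup G) : Prop :=
  F.Normal ∧ Group.IsNilpotent F ∧
    ∀ K : Subgroup G, K.Normal → Group.IsNilpotent K → K ≤ F

section Aux

variable {G : Type*} [Group G]

open scoped commutatorElement in
/-- A minimal normal subgroup of a solvable group is abelian. -/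
lemma aux_minimal_normal_comm [Group.IsSolvable G] {N : Subgroup G} [N.Normal]
    (hN : IsMinimalNormal N) : ∀ a ∈ N, ∀ b ∈ N, a * b = b * a := by
  have hle : ⁅N, N⁆ ≤ N := Subgroup.commutator_le_left N N
  have hnorm : (⁅N, N⁆ : Subgroup G).Normal := inferInstance
  rcases hN.2.2 ⁅N, N⁆ hnorm hle with h | h
  · intro a ha b hb
    have : ⁅a, b⁆ ∈ (⁅N, N⁆ : Subgroup G) := Subgroup.commutator_mem_commutator ha hb
    rw [h, Subgroup.mem_bot] at this
    rwa [commutatorElement_eq_one_iff_mul_comm] at this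
  · exfalso
    -- then commutator of the group N is ⊤, contradicting solvability.
    have hmap : Subgroup.map N.subtype ⁅(⊤ : Subgroup N), ⊤⁆ = ⁅N, N⁆ := by
      rw [Subgroup.map_commutator]
      congr 1 <;> rw [← MonoidHom.range_eq_map, N.range_subtype]
    have htop : ⁅(⊤ : Subgroup N), (⊤ : Subgroup N)⁆ = ⊤ := by
      apply Subgroup.map_injective N.subtype_injective
      rw [hmap, h, ← MonoidHom.range_eq_map, N.range_subtype]
    have hds : ∀ n, derivedSeries N n = ⊤ := by
      intro n
      induction n with
      | zero => rfl
      | succ n ih => rw [derivedSeries_succ, ih, htop]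
    obtain ⟨n, hn⟩ := Group.IsSolvable.solvable (G := N)
    rw [hds n] at hn
    apply hN.2.1
    ext x
    simp only [Subgroup.mem_bot]
    constructor
    · intro hx
      have : (⟨x, hx⟩ : N) ∈ (⊥ : Subgroup N) := by rw [← hn]; trivial
      simpa [Subgroup.mem_bot] using this
    · rintro rfl; exact N.one_mem

/-- Key lemma: a subgroup containing `K` (where `K ⊔ N = ⊤`) and a nontrivial
element of `N` must be all of `G`. -/
lemma aux_key {N : Subgroup G} [N.Normal]
    (hab : ∀ a ∈ N, ∀ b ∈ N, a * b = b * a) (hN : IsMinimalNormal N)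
    {K D : Subgroup G} (hKN : K ⊔ N = ⊤) (hKD : K ≤ D)
    {x : G} (hxN : x ∈ N) (hx1 : x ≠ 1) (hxD : x ∈ D) : D = ⊤ := by
  have hMnorm : (D ⊓ N).Normal := by
    constructor
    intro y hy g
    have hg : g ∈ (K : Set G) * (N : Set G) := by
      rw [← Subgroup.mul_normal K N]; simp [hKN]
    obtain ⟨k, hk, n, hn, hkn⟩ := hg
    have hkn' : k * n = g := hkn
    subst hkn'
    have hyN : y ∈ N := hy.2
    have hcomm : n * y * n⁻¹ = y := by
      rw [hab n hn y hyN]; group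
    have : k * n * y * (k * n)⁻¹ = k * (n * y * n⁻¹) * k⁻¹ := by group
    rw [this, hcomm]
    exact ⟨D.mul_mem (D.mul_mem (hKD hk) hy.1) (D.inv_mem (hKD hk)),
      (inferInstance : N.Normal).conj_mem y hyN k⟩
  rcases hN.2.2 (D ⊓ N) hMnorm inf_le_right with h | h
  · exfalso
    have : x ∈ D ⊓ N := ⟨hxD, hxN⟩
    rw [h, Subgroup.mem_bot] at this
    exact hx1 this
  · have hND : N ≤ D := by rw [← h]; exact inf_le_left
    rw [eq_top_iff, ← hKN]
    exact sup_le hKD hND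

/-- The maximum is attained. -/
lemma aux_mIrr_mem (G : Type*) [Group G] [Finite G] :
    ∃ s : Set G, s.Finite ∧ s.ncard = mIrr G ∧ IrredSet s := by
  have hbdd : BddAbove {n | ∃ s : Set G, s.Finite ∧ s.ncard = n ∧ IrredSet s} := by
    refine ⟨Nat.card G, ?_⟩
    rintro n ⟨s, hs, rfl, -⟩
    rw [← Set.ncard_univ]
    exact Set.ncard_le_ncard (Set.subset_univ s) Set.finite_univ
  have hne : {n | ∃ s : Set G, s.Finite ∧ s.ncard = n ∧ IrredSet s}.Nonempty := by
    -- take a generating set of minimum cardinality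
    set T := {n | ∃ s : Set G, s.Finite ∧ s.ncard = n ∧ Subgroup.closure s = ⊤}
    have hTne : T.Nonempty :=
      ⟨(Set.univ : Set G).ncard, Set.univ, Set.finite_univ, rfl, Subgroup.closure_univ⟩
    obtain ⟨s, hsf, hcard, hgen⟩ := Nat.sInf_mem hTne
    refine ⟨sInf T, s, hsf, hcard, hgen, ?_⟩
    intro x hx hcl
    have : (s \ {x}).ncard ∈ T := ⟨s \ {x}, hsf.diff, rfl, hcl⟩
    have hlt : (s \ {x}).ncard < s.ncard := Set.ncard_diff_singleton_lt_of_mem hx hsf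
    have := Nat.sInf_le this
    omega
  have := Nat.sSup_mem hne hbdd
  obtain ⟨s, hsf, hcard, hirr⟩ := this
  exact ⟨s, hsf, hcard, hirr⟩

lemma aux_le_mIrr {G : Type*} [Group G] [Finite G] {s : Set G} (hs : s.Finite)
    (h : IrredSet s) : s.ncard ≤ mIrr G := by
  have hbdd : BddAbove {n | ∃ s : Set G, s.Finite ∧ s.ncard = n ∧ IrredSet s} := by
    refine ⟨Nat.card G, ?_⟩
    rintro n ⟨s, hs, rfl, -⟩
    rw [← Set.ncard_univ]
    exact Set.ncard_le_ncard (Set.subset_univ s) Set.finite_univ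
  exact le_csSup hbdd ⟨s, hs, rfl, h⟩

variable (N : Subgroup G) [N.Normal]

lemma aux_map_top_iff (A : Subgroup G) :
    Subgroup.map (QuotientGroup.mk' N) A = ⊤ ↔ A ⊔ N = ⊤ := by
  constructor
  · intro h
    have := Subgroup.comap_map_eq (QuotientGroup.mk' N) A
    rw [h, Subgroup.comap_top, QuotientGroup.ker_mk'] at this
    exact this.symm
  · intro h
    have hsurj : Function.Surjective (QuotientGroup.mk' N) := QuotientGroup.mk'_surjective N
    have : Subgroup.map (QuotientGroup.mk' N) (A ⊔ N) = ⊤ := by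
      rw [h, ← MonoidHom.range_eq_map, MonoidHom.range_eq_top]
      exact hsurj
    rw [Subgroup.map_sup] at this
    have hNbot : Subgroup.map (QuotientGroup.mk' N) N = ⊥ := by
      rw [eq_bot_iff]
      rintro y ⟨x, hx, rfl⟩
      simp only [Subgroup.mem_bot, QuotientGroup.mk'_apply]
      rwa [QuotientGroup.eq_one_iff]
    rwa [hNbot, sup_bot_eq] at this

end Aux

theorem mIrr_quotient_of_complemented_minimal_normal
    (G : Type*) [Group G] [Finite G] [Group.IsSolvable G]
    (N : Subgroup G) [N.Normal] (hN : IsMinimalNormal N)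
    (hcompl : ∃ H : Subgroup G, H ⊔ N = ⊤ ∧ H ⊓ N = ⊥) :
    mIrr (G ⧸ N) = mIrr G - 1 := by
  obtain ⟨H, hHN, hHNbot⟩ := hcompl
  have hab := aux_minimal_normal_comm hN
  set π := QuotientGroup.mk' N with hπ
  -- pick a nontrivial element of N
  have hNne : ∃ n : G, n ∈ N ∧ n ≠ 1 := by
    by_contra h
    push_neg at h
    apply hN.2.1
    rw [eq_bot_iff]
    intro x hx
    rw [Subgroup.mem_bot]
    by_contra hx1
    exact hx1 (h x hx)
  obtain ⟨n, hnN, hn1⟩ := hNne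
  -- Direction 1 : mIrr G ≥ mIrr (G/N) + 1
  have dir1 : mIrr (G ⧸ N) + 1 ≤ mIrr G := by
    obtain ⟨t, htf, htcard, htgen, htirr⟩ := aux_mIrr_mem (G ⧸ N)
    -- section of π into H
    have hsec : ∀ q : G ⧸ N, ∃ h : G, h ∈ H ∧ π h = q := by
      intro q
      obtain ⟨g, rfl⟩ := QuotientGroup.mk'_surjective N q
      have hg : g ∈ (H : Set G) * (N : Set G) := by
        rw [← Subgroup.mul_normal H N]; simp [hHN]
      obtain ⟨h, hh, m, hm, hhm⟩ := hg
      have hhm' : h * m = g := hhm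
      subst hhm'
      refine ⟨h, hh, ?_⟩
      simp only [π, QuotientGroup.mk'_apply]
      rw [QuotientGroup.eq]
      have : h⁻¹ * (h * m) = m := by group
      rw [this]; exact hm
    choose σ hσH hσπ using hsec
    set s0 := σ '' t with hs0
    have hs0H : s0 ⊆ (H : Set G) := by rintro _ ⟨q, -, rfl⟩; exact hσH q
    have hinjOn : Set.InjOn π s0 := by
      rintro _ ⟨q, -, rfl⟩ _ ⟨q', -, rfl⟩ h
      rw [hσπ q, hσπ q'] at h
      rw [h]
    have hπs0 : π '' s0 = t := by
      ext q
      constructor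
      · rintro ⟨_, ⟨q', hq', rfl⟩, rfl⟩
        rwa [hσπ]
      · intro hq
        exact ⟨σ q, ⟨q, hq, rfl⟩, hσπ q⟩
    have hσinj : Set.InjOn σ t := by
      intro q hq q' hq' h
      rw [← hσπ q, ← hσπ q', h]
    have hs0card : s0.ncard = t.ncard := Set.ncard_image_of_injOn hσinj
    have hs0f : s0.Finite := htf.image σ
    have hns0 : n ∉ s0 := by
      intro hn
      have : n ∈ H ⊓ N := ⟨hs0H hn, hnN⟩
      rw [hHNbot, Subgroup.mem_bot] at this
      exact hn1 this
    -- closure s0 ⊔ N = ⊤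
    have hK0 : Subgroup.closure s0 ⊔ N = ⊤ := by
      rw [← aux_map_top_iff N, MonoidHom.map_closure, hπs0, htgen]
    -- the set insert n s0 is an irredundant generating set
    have hgen' : Subgroup.closure (insert n s0) = ⊤ := by
      refine aux_key hab hN hK0 ?_ hnN hn1 ?_
      · exact Subgroup.closure_mono (Set.subset_insert n s0)
      · exact Subgroup.subset_closure (Set.mem_insert n s0)
    have hirr' : IrredSet (insert n s0) := by
      refine ⟨hgen', ?_⟩
      intro x hx hcl
      rcases Set.mem_insert_iff.mp hx with rfl | hxs0
      · -- removing n : closure ≤ H ≠ ⊤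
        have hdiff : insert x s0 \ {x} = s0 := by
          exact Set.insert_diff_self_of_notMem hns0
        rw [hdiff] at hcl
        have hle : Subgroup.closure s0 ≤ H := (Subgroup.closure_le H).mpr hs0H
        rw [hcl, top_le_iff] at hle
        apply hN.2.1
        rw [← hHNbot, hle, top_inf_eq]
      · -- removing x ∈ s0
        have hxn : x ≠ n := by rintro rfl; exact hns0 hxs0
        have hmap : Subgroup.map π (Subgroup.closure (insert n s0 \ {x})) = ⊤ := by
          rw [hcl, ← MonoidHom.range_eq_map, MonoidHom.range_eq_top]
          exact QuotientGroup.mk'_surjective N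
        rw [MonoidHom.map_closure] at hmap
        have himg : π '' (insert n s0 \ {x}) = insert 1 (t \ {π x}) := by
          have hd : insert n s0 \ {x} = insert n (s0 \ {x}) := by
            rw [Set.insert_diff_of_notMem _ (by simp [Ne.symm hxn])]
          rw [hd, Set.image_insert_eq]
          congr 1
          · simp only [π, QuotientGroup.mk'_apply]
            rw [QuotientGroup.eq_one_iff]
            exact hnN
          · -- π '' (s0 \ {x}) = t \ {π x}
            rw [← hπs0]
            exact (Set.InjOn.image_diff_subset hinjOn (by simpa using hxs0)).trans
              (by rw [Set.image_singleton])
        rw [himg] at hmap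
        have h1 : Subgroup.closure (insert (1 : G ⧸ N) (t \ {π x})) =
            Subgroup.closure (t \ {π x}) := by
          rw [Set.insert_eq, Subgroup.closure_union, Subgroup.closure_singleton_one,
            bot_sup_eq]
        rw [h1] at hmap
        have hπxt : π x ∈ t := by rw [← hπs0]; exact ⟨x, hxs0, rfl⟩
        exact htirr (π x) hπxt hmap
    have hcard' : (insert n s0).ncard = mIrr (G ⧸ N) + 1 := by
      rw [Set.ncard_insert_of_notMem hns0 hs0f, hs0card, htcard]
    calc mIrr (G ⧸ N) + 1 = (insert n s0).ncard := hcard'.symm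
      _ ≤ mIrr G := aux_le_mIrr (hs0f.insert n) hirr'
  -- Direction 2 : mIrr (G/N) ≥ mIrr G - 1
  have dir2 : mIrr G - 1 ≤ mIrr (G ⧸ N) := by
    obtain ⟨s, hsf, hscard, hsgen, hsirr⟩ := aux_mIrr_mem G
    -- key claim
    have claimC : ∀ x ∈ s, ∀ y ∈ s, x ≠ y →
        Subgroup.closure (s \ {x, y}) ⊔ N ≠ ⊤ := by
      intro x hx y hy hxy hKN
      set K := Subgroup.closure (s \ {x, y}) with hK
      have hxKN : x ∈ (K : Set G) * (N : Set G) := by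
        rw [← Subgroup.mul_normal K N]; simp [hKN]
      obtain ⟨a, ha, m, hm, hxm0⟩ := hxKN
      have hxm : a * m = x := hxm0
      by_cases hm1 : m = 1
      · -- x ∈ K, contradiction with irredundancy at x
        subst hm1
        rw [mul_one] at hxm
        have hxK : x ∈ K := hxm ▸ ha
        have hsub : s ⊆ ↑(Subgroup.closure (s \ {x})) := by
          intro z hz
          by_cases hzx : z = x
          · subst hzx
            exact Subgroup.closure_mono (by intro w hw; exact ⟨hw.1, fun h => hw.2 (Set.mem_insert_iff.mpr (Or.inl h))⟩) hxK
          · exact Subgroup.subset_closure ⟨hz, hzx⟩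
        have : Subgroup.closure s ≤ Subgroup.closure (s \ {x}) :=
          (Subgroup.closure_le _).mpr hsub
        rw [hsgen, top_le_iff] at this
        exact hsirr x hx this
      · -- m ≠ 1 : D := closure (s \ {y}) = ⊤, contradiction at y
        set D := Subgroup.closure (s \ {y}) with hD
        have hKD : K ≤ D := Subgroup.closure_mono (by
          intro z hz
          exact ⟨hz.1, fun h => hz.2 (Set.mem_insert_iff.mpr (Or.inr h))⟩)
        have hxD : x ∈ D := Subgroup.subset_closure ⟨hx, hxy⟩
        have hmD : m ∈ D := by
          have : m = a⁻¹ * x := by rw [← hxm]; group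
          rw [this]
          exact D.mul_mem (D.inv_mem (hKD ha)) hxD
        have : D = ⊤ := aux_key hab hN hKN hKD hm hm1 hmD
        exact hsirr y hy this
    -- extract a minimal generating subset of the image of s in G/N
    set sb := (QuotientGroup.mk' N) '' s with hsb
    have hsbf : sb.Finite := hsf.image _
    set T := {m | ∃ u : Set (G ⧸ N), u ⊆ sb ∧ Subgroup.closure u = ⊤ ∧ u.ncard = m}
      with hT
    have hTne : T.Nonempty := by
      refine ⟨sb.ncard, sb, le_refl _, ?_, rfl⟩
      rw [hsb, ← MonoidHom.map_closure, hsgen, ← MonoidHom.range_eq_map,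
        MonoidHom.range_eq_top]
      exact QuotientGroup.mk'_surjective N
    obtain ⟨u, husb, hugen, hucard⟩ := Nat.sInf_mem hTne
    have huf : u.Finite := hsbf.subset husb
    have huirr : IrredSet u := by
      refine ⟨hugen, ?_⟩
      intro q hq hcl
      have hmem : (u \ {q}).ncard ∈ T :=
        ⟨u \ {q}, (Set.diff_subset).trans husb, hcl, rfl⟩
      have hlt : (u \ {q}).ncard < u.ncard := Set.ncard_diff_singleton_lt_of_mem hq huf
      have := Nat.sInf_le hmem
      omega
    -- size of u is at least mIrr G - 1
    have husize : mIrr G - 1 ≤ u.ncard := by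
      by_contra hlt
      push_neg at hlt
      have h2 : u.ncard + 2 ≤ s.ncard := by omega
      -- choose a section of u into s
      have hsec : ∀ q ∈ u, ∃ g, g ∈ s ∧ (QuotientGroup.mk' N) g = q := by
        intro q hq
        obtain ⟨g, hg, rfl⟩ := husb hq
        exact ⟨g, hg, rfl⟩
      choose τ hτs hτπ using fun q (hq : q ∈ u) => hsec q hq
      set I : Set G := {g | ∃ q, ∃ hq : q ∈ u, g = τ q hq} with hI
      have hIs : I ⊆ s := by rintro g ⟨q, hq, rfl⟩; exact hτs q hq
      have hIf : I.Finite := hsf.subset hIs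
      have hIcard : I.ncard ≤ u.ncard := by
        have : I ⊆ (fun q : G ⧸ N => if hq : q ∈ u then τ q hq else 1) '' u := by
          rintro g ⟨q, hq, rfl⟩
          exact ⟨q, hq, by simp [hq]⟩
        calc I.ncard ≤ _ := Set.ncard_le_ncard this (huf.image _)
          _ ≤ u.ncard := Set.ncard_image_le huf
      -- find two elements of s outside I
      have hdiffcard : 2 ≤ (s \ I).ncard := by
        rw [Set.ncard_diff hIs hIf]
        omega
      obtain ⟨x, y, hx, hy, hxy⟩ := (Set.one_lt_ncard_iff hsf.diff).mp
        (by omega : 1 < (s \ I).ncard)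
      have hIsub : I ⊆ s \ {x, y} := by
        intro g hg
        refine ⟨hIs hg, ?_⟩
        rintro (rfl | rfl)
        · exact hx.2 hg
        · exact hy.2 hg
      have hKN : Subgroup.closure (s \ {x, y}) ⊔ N = ⊤ := by
        rw [← aux_map_top_iff N, MonoidHom.map_closure, eq_top_iff, ← hugen]
        apply Subgroup.closure_mono
        intro q hq
        exact ⟨τ q hq, hIsub ⟨q, hq, rfl⟩, hτπ q hq⟩
      exact claimC x hx.1 y hy.1 hxy hKN
    calc mIrr G - 1 ≤ u.ncard := husize
      _ ≤ mIrr (G ⧸ N) := aux_le_mIrr huf huirr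
  omega
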